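/- Assume m_c < m < 1 where m_c := max(0,(d-2)/d), and set c* := ( ((1-m)·b/(2m)) · Γ(α/(1-m))/Γ(1-α+α/(1-m)) )^{-1/(1-m)}. Then the function U*(z) := c*·z^{-2/(1-m)} is a profile solution: for every z > 0, the function ρ ↦ K(z,ρ)·U*(ρ) is Lebesgue integrable on (z,∞) and U*(z)^m = ∫_z^∞ K(z,ρ)·U*(ρ) dρ. -/

import Mathlib

open MeasureTheory Set Filter

/-- The kernel profile `Q(η) = (1/Γ(1-α)) ∫_η^1 (1-σ^{1/b})^{-α} σ^{1-d} dσ` for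
`η ∈ (0,1)`; for `η ≥ 1` the interval `(η,1)` is empty, so `Q(η) = 0`. -/
noncomputable def Qker (d : ℕ) (α b : ℝ) (η : ℝ) : ℝ :=
  (1 / Real.Gamma (1 - α)) *
    ∫ σ in Set.Ioo η 1, (1 - σ ^ (1 / b)) ^ (-α) * σ ^ (1 - (d:ℝ))

/-- The kernel `K(z,ρ) = ρ·Q(z/ρ)`. -/
noncomputable def Kker (d : ℕ) (α b : ℝ) (z ρ : ℝ) : ℝ := ρ * Qker d α b (z / ρ)


lemma realBeta_intervalIntegrable {u v : ℝ} (hu : 0 < u) (hv : 0 < v) :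
    IntegrableOn (fun t : ℝ => t ^ (u-1) * (1-t) ^ (v-1)) (Ioo 0 1) := by
  have hC : IntervalIntegrable (fun x : ℝ =>
      (x : ℂ) ^ ((u:ℂ) - 1) * (1 - (x : ℂ)) ^ ((v:ℂ) - 1)) volume 0 1 :=
    Complex.betaIntegral_convergent (by simpa using hu) (by simpa using hv)
  have h1 : IntegrableOn (fun x : ℝ =>
      ‖(x : ℂ) ^ ((u:ℂ) - 1) * (1 - (x : ℂ)) ^ ((v:ℂ) - 1)‖) (Ioo 0 1) :=
    (hC.norm.1).mono_set Ioo_subset_Ioc_self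
  refine h1.congr_fun (fun x hx => ?_) measurableSet_Ioo
  obtain ⟨hx0, hx1⟩ := hx
  beta_reduce; rw [norm_mul]
  have e1 : (x:ℂ) ^ ((u:ℂ)-1) = ((x ^ (u-1) : ℝ) : ℂ) := by
    rw [Complex.ofReal_cpow hx0.le]; push_cast; ring_nf
  have e2 : (1 - (x:ℂ)) ^ ((v:ℂ)-1) = (((1-x) ^ (v-1) : ℝ) : ℂ) := by
    rw [show (1 - (x:ℂ)) = (((1-x : ℝ)):ℂ) by push_cast; ring,
      Complex.ofReal_cpow (by linarith)]
    push_cast; ring_nf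
  rw [e1, e2, Complex.norm_real, Complex.norm_real,
    Real.norm_of_nonneg (Real.rpow_nonneg hx0.le _),
    Real.norm_of_nonneg (Real.rpow_nonneg (by linarith) _)]

lemma realBeta_integral {u v : ℝ} (hu : 0 < u) (hv : 0 < v) :
    ∫ t in Ioo (0:ℝ) 1, t ^ (u-1) * (1-t) ^ (v-1)
      = Real.Gamma u * Real.Gamma v / Real.Gamma (u+v) := by
  have key : Complex.Gamma u * Complex.Gamma v
      = Complex.Gamma (u+v) * Complex.betaIntegral u v := by
    have := Complex.Gamma_mul_Gamma_eq_betaIntegral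
      (s := (u:ℂ)) (t := (v:ℂ)) (by simpa using hu) (by simpa using hv)
    simpa using this
  have hBeta : Complex.betaIntegral u v
      = ((∫ t in Ioo (0:ℝ) 1, t ^ (u-1) * (1-t) ^ (v-1) : ℝ) : ℂ) := by
    rw [Complex.betaIntegral]
    rw [show (∫ t in Ioo (0:ℝ) 1, t ^ (u-1) * (1-t) ^ (v-1))
        = ∫ t in (0:ℝ)..1, t ^ (u-1) * (1-t) ^ (v-1) by
      rw [intervalIntegral.integral_of_le zero_le_one, integral_Ioc_eq_integral_Ioo]]
    rw [← intervalIntegral.integral_ofReal]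
    rw [intervalIntegral.integral_of_le zero_le_one, intervalIntegral.integral_of_le zero_le_one,
      integral_Ioc_eq_integral_Ioo, integral_Ioc_eq_integral_Ioo]
    refine setIntegral_congr_fun measurableSet_Ioo (fun x hx => ?_)
    obtain ⟨hx0, hx1⟩ := hx
    have e1 : (x:ℂ) ^ ((u:ℂ)-1) = ((x ^ (u-1) : ℝ) : ℂ) := by
      rw [Complex.ofReal_cpow hx0.le]; push_cast; ring_nf
    have e2 : (1 - (x:ℂ)) ^ ((v:ℂ)-1) = (((1-x) ^ (v-1) : ℝ) : ℂ) := by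
      rw [show (1 - (x:ℂ)) = (((1-x : ℝ)):ℂ) by push_cast; ring,
        Complex.ofReal_cpow (by linarith)]
      push_cast; ring_nf
    rw [e1, e2]; push_cast; ring
  rw [hBeta, Complex.Gamma_ofReal, Complex.Gamma_ofReal,
    show ((u:ℂ) + v) = ((u + v : ℝ) : ℂ) by push_cast; ring, Complex.Gamma_ofReal] at key
  have hG : Real.Gamma (u+v) ≠ 0 := (Real.Gamma_pos_of_pos (by linarith)).ne'
  have : Real.Gamma u * Real.Gamma v
      = Real.Gamma (u+v) * ∫ t in Ioo (0:ℝ) 1, t ^ (u-1) * (1-t) ^ (v-1) := by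
    exact_mod_cast key
  field_simp [this]
  rw [this]; ring


lemma rpow_image_Ioo {b : ℝ} (hb : 0 < b) :
    (fun t : ℝ => t ^ b) '' Ioo 0 1 = Ioo 0 1 := by
  ext y
  constructor
  · rintro ⟨t, ⟨ht0, ht1⟩, rfl⟩
    exact ⟨Real.rpow_pos_of_pos ht0 b, Real.rpow_lt_one ht0.le ht1 hb⟩
  · rintro ⟨hy0, hy1⟩
    refine ⟨y ^ (1/b), ⟨Real.rpow_pos_of_pos hy0 _, Real.rpow_lt_one hy0.le hy1 (by positivity)⟩, ?_⟩
    show (y ^ (1/b)) ^ b = y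
    rw [← Real.rpow_mul hy0.le, one_div, inv_mul_cancel₀ hb.ne', Real.rpow_one]

lemma rpow_injOn_Ioo {b : ℝ} (hb : 0 < b) :
    InjOn (fun t : ℝ => t ^ b) (Ioo 0 1) := by
  have key : ∀ t ∈ Ioo (0:ℝ) 1, (t ^ b) ^ (1/b) = t := fun t ht => by
    rw [← Real.rpow_mul ht.1.le, mul_one_div, div_self hb.ne', Real.rpow_one]
  intro x hx y hy h
  rw [← key x hx, ← key y hy]
  simp only at h
  rw [h]

/-- `∫_0^1 (1-σ^{1/b})^{-α} σ^q dσ = b·Γ(b(q+1))Γ(1-α)/Γ(b(q+1)+(1-α))`, with integrability. -/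
lemma subst_beta {α b q : ℝ} (hα : α ∈ Ioo (0:ℝ) 1) (hb : 0 < b) (hq : 0 < b * (q+1)) :
    IntegrableOn (fun σ : ℝ => (1 - σ ^ (1/b)) ^ (-α) * σ ^ q) (Ioo 0 1) ∧
    ∫ σ in Ioo (0:ℝ) 1, (1 - σ ^ (1/b)) ^ (-α) * σ ^ q
      = b * (Real.Gamma (b*(q+1)) * Real.Gamma (1-α) / Real.Gamma (b*(q+1) + (1-α))) := by
  have hderiv : ∀ t ∈ Ioo (0:ℝ) 1, HasDerivWithinAt (fun t : ℝ => t ^ b)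
      (b * t ^ (b-1)) (Ioo 0 1) t := fun t ht =>
    (Real.hasDerivAt_rpow_const (Or.inl ht.1.ne')).hasDerivWithinAt
  have hα1 : (0:ℝ) < 1 - α := by linarith [hα.2]
  have heq : EqOn (fun t : ℝ => b * (t ^ (b*(q+1) - 1) * (1-t) ^ ((1-α) - 1)))
      (fun t : ℝ => |b * t ^ (b-1)| • ((1 - (t ^ b) ^ (1/b)) ^ (-α) * (t ^ b) ^ q))
      (Ioo 0 1) := by
    intro t ht
    obtain ⟨ht0, ht1⟩ := ht
    have h1 : (t ^ b) ^ (1/b) = t := by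
      rw [← Real.rpow_mul ht0.le, mul_one_div, div_self hb.ne', Real.rpow_one]
    have h2 : (t ^ b) ^ q = t ^ (b*q) := (Real.rpow_mul ht0.le b q).symm
    have h3 : |b * t ^ (b-1)| = b * t ^ (b-1) :=
      abs_of_nonneg (by positivity)
    simp only [smul_eq_mul, h1, h2, h3]
    rw [show (1-α) - 1 = -α by ring, show b*(q+1) - 1 = (b-1) + b*q by ring,
      Real.rpow_add ht0]
    ring
  have hbeta := realBeta_intervalIntegrable (u := b*(q+1)) (v := 1-α) hq hα1
  have hbetav := realBeta_integral (u := b*(q+1)) (v := 1-α) hq hα1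
  constructor
  · rw [← rpow_image_Ioo hb,
      integrableOn_image_iff_integrableOn_abs_deriv_smul measurableSet_Ioo hderiv
        (rpow_injOn_Ioo hb)]
    exact IntegrableOn.congr_fun (hbeta.const_mul b) heq measurableSet_Ioo
  · rw [← rpow_image_Ioo hb,
      integral_image_eq_integral_abs_deriv_smul measurableSet_Ioo hderiv (rpow_injOn_Ioo hb),
      ← setIntegral_congr_fun measurableSet_Ioo heq, integral_const_mul, hbetav]

section Key
variable {d : ℕ} {α b γ : ℝ}

lemma key_lemma (hα : α ∈ Ioo (0:ℝ) 1) (hb : 0 < b) (hγ2 : 2 < γ) (hγd : (d:ℝ) < γ) :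
    IntegrableOn (fun η : ℝ => η ^ (γ-3) * Qker d α b η) (Ioo 0 1) ∧
    ∫ η in Ioo (0:ℝ) 1, η ^ (γ-3) * Qker d α b η
      = (b/(γ-2)) * (Real.Gamma (b*(γ-(d:ℝ))) / Real.Gamma (b*(γ-(d:ℝ)) + (1-α))) := by
  have hα1 : (0:ℝ) < 1 - α := by linarith [hα.2]
  have hGα : (0:ℝ) < Real.Gamma (1-α) := Real.Gamma_pos_of_pos hα1
  set g : ℝ → ℝ := fun σ => (1 - σ ^ (1/b)) ^ (-α) * σ ^ (1 - (d:ℝ)) with hg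
  set f : ℝ → ℝ → ℝ := fun σ η =>
    (Ioo (0:ℝ) 1).indicator g σ * (Ioo (0:ℝ) σ).indicator (fun t => t ^ (γ-3)) η with hf
  -- measurability
  have hgm : Measurable g := by
    rw [hg]; fun_prop
  have hfm : Measurable (Function.uncurry f) := by
    have : Function.uncurry f = fun p : ℝ × ℝ =>
        (Ioo (0:ℝ) 1).indicator g p.1 *
          ({q : ℝ × ℝ | 0 < q.2 ∧ q.2 < q.1}).indicator (fun q => q.2 ^ (γ-3)) p := by
      funext p
      simp only [Function.uncurry, hf, Set.indicator, mem_Ioo, mem_setOf_eq]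
    rw [this]
    exact ((hgm.indicator measurableSet_Ioo).comp measurable_fst).mul
      (((by fun_prop : Measurable fun q : ℝ × ℝ => q.2 ^ (γ-3))).indicator
        ((measurableSet_lt measurable_const measurable_snd).inter
          (measurableSet_lt measurable_snd measurable_fst)))
  -- nonnegativity
  have hf0 : ∀ σ η, 0 ≤ f σ η := by
    intro σ η
    apply mul_nonneg
    · exact Set.indicator_nonneg (fun x hx => mul_nonneg
        (Real.rpow_nonneg (by
          have : x ^ (1/b) < 1 := Real.rpow_lt_one hx.1.le hx.2 (by positivity)
          linarith) _) (Real.rpow_nonneg hx.1.le _)) σ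
    · exact Set.indicator_nonneg (fun x hx => Real.rpow_nonneg hx.1.le _) η
  -- slice integrability in η
  have hrpow_int : ∀ σ : ℝ, IntegrableOn (fun t : ℝ => t ^ (γ-3)) (Ioo 0 σ) := by
    intro σ
    rcases le_or_gt σ 0 with h | h
    · rw [Set.Ioo_eq_empty (by intro hlt; exact absurd (hlt.trans_le h) (lt_irrefl 0))]
      exact integrableOn_empty
    · exact (intervalIntegral.intervalIntegrable_rpow' (by linarith) (a := 0) (b := σ)).1.mono_set
        Ioo_subset_Ioc_self
  have hrpow_val : ∀ σ : ℝ, 0 < σ → ∫ t in Ioo (0:ℝ) σ, t ^ (γ-3) = σ ^ (γ-2) / (γ-2) := by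
    intro σ hσ
    rw [← integral_Ioc_eq_integral_Ioo, ← intervalIntegral.integral_of_le hσ.le,
      integral_rpow (Or.inl (by linarith))]
    rw [Real.zero_rpow (by intro h; rw [show γ-3+1 = γ-2 by ring] at h; nlinarith), sub_zero,
      show γ-3+1 = γ-2 by ring]
  -- integrability of the beta-type integrand
  have hq1 : 0 < b * ((γ - 1 - (d:ℝ)) + 1) := by
    apply mul_pos hb; push_cast; linarith
  obtain ⟨hbint, hbval⟩ := subst_beta (q := γ - 1 - (d:ℝ)) hα hb hq1
  -- value of inner integral in η for fixed σ
  have hinner : ∀ σ : ℝ, (∫ η, f σ η)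
      = (Ioo (0:ℝ) 1).indicator (fun σ => g σ * (σ ^ (γ-2) / (γ-2))) σ := by
    intro σ
    rw [show (fun η => f σ η) = fun η =>
        (Ioo (0:ℝ) 1).indicator g σ * (Ioo (0:ℝ) σ).indicator (fun t => t ^ (γ-3)) η from rfl]
    rw [integral_const_mul, integral_indicator measurableSet_Ioo]
    by_cases hσ : σ ∈ Ioo (0:ℝ) 1
    · rw [Set.indicator_of_mem hσ, Set.indicator_of_mem hσ, hrpow_val σ hσ.1]
    · rw [Set.indicator_of_notMem hσ, Set.indicator_of_notMem hσ, zero_mul]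
  -- integrability of uncurry f
  have hF : Integrable (Function.uncurry f) (volume.prod volume) := by
    rw [integrable_prod_iff hfm.aestronglyMeasurable]
    constructor
    · refine Filter.Eventually.of_forall (fun σ => ?_)
      show Integrable (fun η => (Ioo (0:ℝ) 1).indicator g σ *
        (Ioo (0:ℝ) σ).indicator (fun t => t ^ (γ-3)) η) volume
      exact (((integrable_indicator_iff measurableSet_Ioo).2 (hrpow_int σ))).const_mul _
    · have : (fun σ => ∫ η, ‖Function.uncurry f (σ, η)‖) = fun σ =>
          (Ioo (0:ℝ) 1).indicator (fun σ => g σ * (σ ^ (γ-2) / (γ-2))) σ := by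
        funext σ
        rw [show (fun η => ‖Function.uncurry f (σ, η)‖) = fun η => f σ η by
          funext η; exact Real.norm_of_nonneg (hf0 σ η)]
        exact hinner σ
      rw [this]
      rw [integrable_indicator_iff measurableSet_Ioo]
      refine IntegrableOn.congr_fun (hbint.const_mul (1/(γ-2))) (fun σ hσ => ?_) measurableSet_Ioo
      obtain ⟨hσ0, hσ1⟩ := hσ
      show 1/(γ-2) * ((1 - σ ^ (1/b)) ^ (-α) * σ ^ (γ-1-(d:ℝ))) = g σ * (σ ^ (γ-2) / (γ-2))
      rw [hg, show γ-1-(d:ℝ) = (1-(d:ℝ)) + (γ-2) by ring, Real.rpow_add hσ0]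
      ring

  -- value of inner integral in σ for fixed η
  have houter_eq : (fun η => ∫ σ, f σ η)
      = (Ioo (0:ℝ) 1).indicator
          (fun η => Real.Gamma (1-α) * (η ^ (γ-3) * Qker d α b η)) := by
    funext η
    by_cases hη : η ∈ Ioo (0:ℝ) 1
    · obtain ⟨hη0, hη1⟩ := hη
      have hsl : (fun σ => f σ η) = fun σ => η ^ (γ-3) * (Ioo η 1).indicator g σ := by
        funext σ
        show (Ioo (0:ℝ) 1).indicator g σ * (Ioo (0:ℝ) σ).indicator (fun t => t ^ (γ-3)) η = _
        by_cases h3 : η < σ ∧ σ < 1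
        · have h1 : 0 < σ ∧ σ < 1 := ⟨hη0.trans h3.1, h3.2⟩
          have h2 : 0 < η ∧ η < σ := ⟨hη0, h3.1⟩
          simp only [Set.indicator, mem_Ioo, if_pos h1, if_pos h2, if_pos h3]; ring
        · by_cases h1 : 0 < σ ∧ σ < 1
          · have h2 : ¬(0 < η ∧ η < σ) := by
              rintro ⟨_, hlt⟩; exact h3 ⟨hlt, h1.2⟩
            simp only [Set.indicator, mem_Ioo, if_neg h2, if_neg h3, mul_zero]
          · simp only [Set.indicator, mem_Ioo, if_neg h1, if_neg h3, zero_mul, mul_zero]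
      rw [hsl, integral_const_mul, integral_indicator measurableSet_Ioo,
        Set.indicator_of_mem (show η ∈ Ioo (0:ℝ) 1 from ⟨hη0, hη1⟩)]
      have : ∫ σ in Ioo η 1, g σ = Real.Gamma (1-α) * Qker d α b η := by
        rw [Qker]; field_simp
        rfl
      rw [this]; ring
    · have hsl : (fun σ => f σ η) = fun _ => (0:ℝ) := by
        funext σ
        simp only [hf, Set.indicator, mem_Ioo]
        rw [mem_Ioo, not_and_or, not_lt, not_lt] at hη
        by_cases h1 : 0 < σ ∧ σ < 1 <;> by_cases h2 : 0 < η ∧ η < σ <;>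
          simp only [h1, h2, if_true, if_false, mul_zero, zero_mul]
        exfalso
        rcases hη with h | h
        · exact absurd h2.1 (not_lt.2 h)
        · exact absurd (h.trans_lt h2.2) (not_lt.2 h1.2.le)
      rw [hsl, integral_zero, Set.indicator_of_notMem hη]
  -- Fubini
  have hswap := integral_integral_swap (f := f) hF
  have houter_int : Integrable (fun η => ∫ σ, f σ η) volume := hF.integral_prod_right
  rw [houter_eq] at houter_int hswap
  have hCint : IntegrableOn
      (fun η : ℝ => Real.Gamma (1-α) * (η ^ (γ-3) * Qker d α b η)) (Ioo 0 1) :=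
    (integrable_indicator_iff measurableSet_Ioo).1 houter_int
  have hint : IntegrableOn (fun η : ℝ => η ^ (γ-3) * Qker d α b η) (Ioo 0 1) := by
    refine IntegrableOn.congr_fun (hCint.const_mul (1/Real.Gamma (1-α)))
      (fun η _ => ?_) measurableSet_Ioo
    field_simp
  refine ⟨hint, ?_⟩
  -- compute both sides of hswap
  have hRHS : (∫ η, (Ioo (0:ℝ) 1).indicator
        (fun η => Real.Gamma (1-α) * (η ^ (γ-3) * Qker d α b η)) η)
      = Real.Gamma (1-α) * ∫ η in Ioo (0:ℝ) 1, η ^ (γ-3) * Qker d α b η := by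
    rw [integral_indicator measurableSet_Ioo, integral_const_mul]
  have hLHS : (∫ σ, ∫ η, f σ η)
      = (b/(γ-2)) * (Real.Gamma (b*(γ-(d:ℝ))) * Real.Gamma (1-α)
          / Real.Gamma (b*(γ-(d:ℝ)) + (1-α))) := by
    rw [show (fun σ => ∫ η, f σ η) = fun σ => (Ioo (0:ℝ) 1).indicator
        (fun σ => g σ * (σ ^ (γ-2) / (γ-2))) σ from funext hinner]
    rw [integral_indicator measurableSet_Ioo]
    have : ∫ σ in Ioo (0:ℝ) 1, g σ * (σ ^ (γ-2) / (γ-2))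
        = ∫ σ in Ioo (0:ℝ) 1, 1/(γ-2) * ((1 - σ ^ (1/b)) ^ (-α) * σ ^ (γ-1-(d:ℝ))) := by
      refine setIntegral_congr_fun measurableSet_Ioo (fun σ hσ => ?_)
      rw [hg]
      show (1 - σ ^ (1/b)) ^ (-α) * σ ^ (1-(d:ℝ)) * (σ ^ (γ-2) / (γ-2)) = _
      rw [show γ-1-(d:ℝ) = (1-(d:ℝ)) + (γ-2) by ring, Real.rpow_add hσ.1]
      ring
    rw [this, integral_const_mul, hbval, show γ-1-(d:ℝ)+1 = γ-(d:ℝ) by ring]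
    ring
  rw [hLHS, hRHS] at hswap
  have : (b/(γ-2)) * (Real.Gamma (b*(γ-(d:ℝ))) * Real.Gamma (1-α)
      / Real.Gamma (b*(γ-(d:ℝ)) + (1-α)))
      = Real.Gamma (1-α) * ((b/(γ-2)) * (Real.Gamma (b*(γ-(d:ℝ)))
          / Real.Gamma (b*(γ-(d:ℝ)) + (1-α)))) := by ring
  rw [this] at hswap
  exact mul_left_cancel₀ hGα.ne' hswap.symm
end Key

/-- A profile solution: `U : (0,∞) → [0,∞)` with, for every `z > 0`,
`ρ ↦ K(z,ρ)·U(ρ)` integrable on `(z,∞)` and `U(z)^m = ∫_z^∞ K(z,ρ)·U(ρ) dρ`. -/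
def IsProfileSolution (d : ℕ) (α b m : ℝ) (U : ℝ → ℝ) : Prop :=
  (∀ z, 0 < z → 0 ≤ U z) ∧
  ∀ z, 0 < z →
    MeasureTheory.IntegrableOn (fun ρ => Kker d α b z ρ * U ρ) (Set.Ioi z) ∧
    U z ^ m = ∫ ρ in Set.Ioi z, Kker d α b z ρ * U ρ

/-- in the mildly-fast-diffusion range `m_c < m < 1`, the very singular
solution `U*(z) = c*·z^{-2/(1-m)}` is a profile solution. -/
theorem very_singular_solution (d : ℕ) (hd : 1 ≤ d) (α m b : ℝ)
    (hα : α ∈ Set.Ioo (0:ℝ) 1)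
    (hmc : max 0 (((d:ℝ) - 2) / d) < m) (hm1 : m < 1)
    (hb : b = α / (2 + (d:ℝ) * (m - 1)))
    (cstar : ℝ)
    (hc : cstar = (((1 - m) * b / (2 * m)) *
      Real.Gamma (α / (1 - m)) / Real.Gamma (1 - α + α / (1 - m))) ^ (-(1 / (1 - m)))) :
    IsProfileSolution d α b m (fun z => cstar * z ^ (-(2 / (1 - m)))) := by
  
  have hm0 : 0 < m := (le_max_left 0 _).trans_lt hmc
  have h1m : 0 < 1 - m := by linarith
  have hd0 : (0:ℝ) < (d:ℝ) := Nat.cast_pos.2 hd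
  have hdm : (d:ℝ) - 2 < (d:ℝ) * m := by
    have h1 := (max_lt_iff.1 hmc).2
    have h2 : (d:ℝ) - 2 < m * d := (div_lt_iff₀ hd0).1 h1
    linarith [mul_comm m (d:ℝ)]
  have hden : 0 < 2 + (d:ℝ)*(m-1) := by nlinarith
  have hb0 : 0 < b := hb ▸ div_pos hα.1 hden
  set γ : ℝ := 2/(1-m) with hγdef
  have hγ2 : 2 < γ := by rw [hγdef, lt_div_iff₀ h1m]; nlinarith
  have hγd : (d:ℝ) < γ := by rw [hγdef, lt_div_iff₀ h1m]; nlinarith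
  have hu : b*(γ-(d:ℝ)) = α/(1-m) := by
    rw [hb, hγdef]; field_simp; ring
  have hu0 : 0 < α/(1-m) := div_pos hα.1 h1m
  obtain ⟨hKint, hKval⟩ := key_lemma (d := d) hα hb0 hγ2 hγd
  set J : ℝ := (b/(γ-2)) * (Real.Gamma (b*(γ-(d:ℝ))) / Real.Gamma (b*(γ-(d:ℝ)) + (1-α)))
    with hJdef
  have hJpos : 0 < J := by
    apply mul_pos (div_pos hb0 (by linarith))
    exact div_pos (Real.Gamma_pos_of_pos (by rw [hu]; exact hu0))
      (Real.Gamma_pos_of_pos (by rw [hu]; linarith [hα.2]))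
  have hcJ : cstar = J ^ (-(1/(1-m))) := by
    rw [hc]; congr 1
    have harg : α/(1-m) + (1-α) = 1-α+α/(1-m) := by ring
    have hcoef : b/(γ-2) = (1-m)*b/(2*m) := by
      rw [hγdef, div_eq_div_iff (by rw [← hγdef]; linarith) (by positivity)]
      field_simp
      ring
    rw [hJdef, hu, harg, hcoef, mul_div_assoc]
  have hcpos : 0 < cstar := hcJ ▸ Real.rpow_pos_of_pos hJpos _
  unfold IsProfileSolution
  refine ⟨fun z hz => mul_nonneg hcpos.le (Real.rpow_nonneg hz.le _), fun z hz => ?_⟩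
  have hz0 : z ≠ 0 := hz.ne'
  -- change of variables ρ = z/η
  have himage : (fun η : ℝ => z/η) '' Set.Ioo 0 1 = Set.Ioi z := by
    ext ρ
    simp only [Set.mem_image, Set.mem_Ioo, Set.mem_Ioi]
    constructor
    · rintro ⟨η, ⟨h0, h1⟩, rfl⟩
      rw [lt_div_iff₀ h0]; nlinarith
    · intro hρ
      have hρ0 : 0 < ρ := hz.trans hρ
      exact ⟨z/ρ, ⟨div_pos hz hρ0, (div_lt_one hρ0).2 hρ⟩, by field_simp⟩
  have hderiv : ∀ η ∈ Set.Ioo (0:ℝ) 1,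
      HasDerivWithinAt (fun η : ℝ => z/η) (-(z/η^2)) (Set.Ioo 0 1) η := by
    intro η hη
    have h := (hasDerivAt_inv (ne_of_gt hη.1)).const_mul z
    have h1 : z * -(η^2)⁻¹ = -(z/η^2) := by field_simp
    have h2 : (fun y : ℝ => z * y⁻¹) = fun y : ℝ => z/y := by
      funext y; rw [div_eq_mul_inv]
    rw [h1, h2] at h
    exact h.hasDerivWithinAt
  have hinj : Set.InjOn (fun η : ℝ => z/η) (Set.Ioo 0 1) := by
    intro a ha b' hb' h
    simp only at h
    rw [div_eq_div_iff ha.1.ne' hb'.1.ne'] at h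
    exact (mul_left_cancel₀ hz0 h).symm
  have heq : Set.EqOn (fun η : ℝ => (cstar * z^((2:ℝ)-γ)) * (η^(γ-3) * Qker d α b η))
      (fun η : ℝ => |-(z/η^2)| • (Kker d α b z (z/η) * (cstar * (z/η)^(-γ))))
      (Set.Ioo 0 1) := by
    intro η hη
    obtain ⟨hη0, hη1⟩ := hη
    have hzz : z/(z/η) = η := by
      rw [div_div_eq_mul_div, mul_comm, mul_div_assoc, div_self hz0, mul_one]
    have habs : |-(z/η^2)| = z/η^2 := by
      rw [abs_neg, abs_of_nonneg (by positivity)]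
    simp only [smul_eq_mul]
    rw [habs, Kker, hzz]
    have hdr : (z/η)^(-γ) = z^(-γ) * η^γ := by
      rw [Real.div_rpow hz.le hη0.le, Real.rpow_neg hη0.le, div_inv_eq_mul]
    have hz2 : z^((2:ℝ)-γ) = z^(2:ℕ) * z^(-γ) := by
      rw [show (2:ℝ)-γ = ((2:ℕ):ℝ) + (-γ) by push_cast; ring, Real.rpow_add hz,
        Real.rpow_natCast]
    have hη3 : η^(γ-(3:ℝ)) = η^γ * (η^(3:ℕ))⁻¹ := by
      rw [show γ-(3:ℝ) = γ + (-((3:ℕ):ℝ)) by push_cast; ring, Real.rpow_add hη0,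
        Real.rpow_neg hη0.le, Real.rpow_natCast]
    rw [hdr, hz2, hη3]
    field_simp
  constructor
  · show MeasureTheory.IntegrableOn
      (fun ρ => Kker d α b z ρ * (cstar * ρ^(-γ))) (Set.Ioi z) MeasureTheory.volume
    rw [← himage, integrableOn_image_iff_integrableOn_abs_deriv_smul
      measurableSet_Ioo hderiv hinj]
    exact IntegrableOn.congr_fun (hKint.const_mul _) heq measurableSet_Ioo
  · show (cstar * z^(-γ))^m = ∫ ρ in Set.Ioi z, Kker d α b z ρ * (cstar * ρ^(-γ))
    rw [← himage, integral_image_eq_integral_abs_deriv_smul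
      measurableSet_Ioo hderiv hinj,
      ← setIntegral_congr_fun measurableSet_Ioo heq, integral_const_mul, hKval]
    have e1 : (cstar * z^(-γ))^m = cstar^m * (z^(-γ))^m :=
      Real.mul_rpow hcpos.le (Real.rpow_nonneg hz.le _)
    have e2 : (z^(-γ))^m = z^((-γ)*m) := (Real.rpow_mul hz.le (-γ) m).symm
    have e3 : (-γ)*m = 2-γ := by rw [hγdef]; field_simp; ring
    have e4 : cstar^m = cstar * J := by
      have hexp : -(1/(1-m))*m = -(1/(1-m))+1 := by field_simp; ring
      rw [hcJ, ← Real.rpow_mul hJpos.le, hexp, Real.rpow_add hJpos, Real.rpow_one]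
    rw [e1, e2, e3, e4, hJdef]
    ring
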